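/- For every countable compact metric space K, the Banach space C(K) of continuous real-valued functions on K with the sup norm admits an Auerbach basis. -/

import Mathlib

/-- An Auerbach basis of a normed space: a biorthogonal system of norm-one vectors and
norm-one functionals which is fundamental (the closed linear span of the vectors is the
whole space) and total (the functionals separate points). -/
structure IsAuerbachBasis {X : Type*} [NormedAddCommGroup X] [NormedSpace ℝ X]
    {ι : Type*} (x : ι → X) (f : ι → X →L[ℝ] ℝ) : Prop where
  biorth_eq : ∀ k, f k (x k) = 1
  biorth_ne : ∀ k j, k ≠ j → f k (x j) = 0
  norm_vec : ∀ n, ‖x n‖ = 1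
  norm_fun : ∀ n, ‖f n‖ = 1
  fundamental : (Submodule.span ℝ (Set.range x)).topologicalClosure = ⊤
  total : ∀ y, (∀ n, f n y = 0) → y = 0


open Set Filter Topology

namespace Stmt17

attribute [local instance] Classical.propDecidable
/-- membership in the cylinder coded by `t` (coordinates `t.length - 1, ..., 0` read as
`x (t.length -1) :: ... :: x 0`, i.e. `PiNat.res`). -/
def memC (t : List Bool) (x : ℕ → Bool) : Prop := PiNat.res x t.length = t

lemma memC_nil (x : ℕ → Bool) : memC [] x := by simp [memC, PiNat.res]

lemma memC_cons {b : Bool} {t : List Bool} {x : ℕ → Bool} :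
    memC (b :: t) x ↔ memC t x ∧ x t.length = b := by
  simp only [memC, List.length_cons, PiNat.res_succ, List.cons.injEq]
  tauto

lemma memC_res (x : ℕ → Bool) (n : ℕ) : memC (PiNat.res x n) x := by
  simp [memC, PiNat.res_length]

lemma memC.agree {t : List Bool} {x x' : ℕ → Bool} (h : memC t x) (h' : memC t x')
    {i : ℕ} (hi : i < t.length) : x i = x' i := by
  have : PiNat.res x t.length = PiNat.res x' t.length := h.trans h'.symm
  exact PiNat.res_eq_res.1 this hi

lemma memC_append {s t : List Bool} {x : ℕ → Bool} (h : memC (s ++ t) x) : memC t x := by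
  induction s with
  | nil => exact h
  | cons a s ih => exact ih (memC_cons.1 h).1

lemma res_append (x : ℕ → Bool) (m k : ℕ) : ∃ s, PiNat.res x (m + k) = s ++ PiNat.res x m := by
  induction k with
  | zero => exact ⟨[], rfl⟩
  | succ k ih =>
    obtain ⟨s, hs⟩ := ih
    refine ⟨x (m + k) :: s, ?_⟩
    rw [show m + (k+1) = (m+k)+1 by ring, PiNat.res_succ, hs]
    rfl

lemma trichotomy (t u : List Bool) :
    (∃ s, u = s ++ t) ∨ (∃ s, t = s ++ u) ∨ (∀ x, ¬(memC t x ∧ memC u x)) := by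
  by_cases hx : ∃ x, memC t x ∧ memC u x
  · obtain ⟨x, hxt, hxu⟩ := hx
    rcases le_total t.length u.length with hle | hle
    · left
      obtain ⟨s, hs⟩ := res_append x t.length (u.length - t.length)
      rw [Nat.add_sub_cancel' hle] at hs
      exact ⟨s, by rw [← hxu, hs, hxt]⟩
    · right; left
      obtain ⟨s, hs⟩ := res_append x u.length (t.length - u.length)
      rw [Nat.add_sub_cancel' hle] at hs
      exact ⟨s, by rw [← hxt, hs, hxu]⟩
  · right; right; push_neg at hx; exact fun x h => hx x h.1 h.2

lemma isClopen_memC (t : List Bool) : IsClopen {x : ℕ → Bool | memC t x} := by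
  induction t with
  | nil => simpa [memC_nil] using isClopen_univ
  | cons b t ih =>
    have : {x : ℕ → Bool | memC (b :: t) x}
        = {x : ℕ → Bool | memC t x} ∩ ((fun x : ℕ → Bool => x t.length) ⁻¹' {b}) := by
      ext x; simp [memC_cons]
    rw [this]
    exact ih.inter ((isClopen_discrete _).preimage (continuous_apply _))


section S
variable (S : Set (ℕ → Bool))

/-- the cylinder `t` meets `S`. -/
def NE (t : List Bool) : Prop := ∃ x ∈ S, memC t x

/-- weight of a node. -/
noncomputable def w : List Bool → ℝ
  | [] => 1
  | b :: t => if NE S (b :: t) then (if NE S ((!b) :: t) then w t / 2 else w t) else 0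

lemma w_nil : w S [] = 1 := rfl
lemma w_cons (b : Bool) (t : List Bool) :
    w S (b :: t) = if NE S (b :: t) then (if NE S ((!b) :: t) then w S t / 2 else w S t) else 0 :=
  rfl

lemma NE_of_cons {b : Bool} {t : List Bool} (h : NE S (b :: t)) : NE S t := by
  obtain ⟨x, hxS, hx⟩ := h
  exact ⟨x, hxS, (memC_cons.1 hx).1⟩

lemma NE_child {t : List Bool} (h : NE S t) : NE S (true :: t) ∨ NE S (false :: t) := by
  obtain ⟨x, hxS, hx⟩ := h
  cases hb : x t.length
  · exact Or.inr ⟨x, hxS, memC_cons.2 ⟨hx, hb⟩⟩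
  · exact Or.inl ⟨x, hxS, memC_cons.2 ⟨hx, hb⟩⟩

lemma w_nonneg (t : List Bool) : 0 ≤ w S t := by
  induction t with
  | nil => norm_num [w_nil]
  | cons b t ih => rw [w_cons]; split_ifs <;> linarith

lemma w_le_one (t : List Bool) : w S t ≤ 1 := by
  induction t with
  | nil => norm_num [w_nil]
  | cons b t ih => rw [w_cons]; split_ifs <;> linarith

lemma w_pos {t : List Bool} (h : NE S t) : 0 < w S t := by
  induction t with
  | nil => norm_num [w_nil]
  | cons b t ih =>
    have ht := NE_of_cons S h
    rw [w_cons, if_pos h]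
    split_ifs <;> [linarith [ih ht]; exact ih ht]

lemma w_eq_zero {t : List Bool} [Nonempty ↥S] (h : ¬ NE S t) : w S t = 0 := by
  cases t with
  | nil =>
    exact absurd ⟨(Classical.arbitrary ↥S).1, (Classical.arbitrary ↥S).2, memC_nil _⟩ h
  | cons b t => rw [w_cons, if_neg h]

lemma w_children [Nonempty ↥S] (t : List Bool) :
    w S (true :: t) + w S (false :: t) = w S t := by
  by_cases h1 : NE S (true :: t) <;> by_cases h2 : NE S (false :: t)
  · rw [w_cons, w_cons]
    simp only [Bool.not_true, Bool.not_false, if_pos h1, if_pos h2]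
    ring
  · rw [w_cons, w_cons]
    simp only [Bool.not_true, Bool.not_false, if_pos h1, if_neg h2]
    ring
  · rw [w_cons, w_cons]
    simp only [Bool.not_true, Bool.not_false, if_neg h1, if_pos h2]
    ring
  · have ht : ¬ NE S t := fun h => (NE_child S h).elim h1 h2
    rw [w_cons, w_cons, if_neg h1, if_neg h2, w_eq_zero S ht]
    ring

lemma w_split {t : List Bool} (h1 : NE S (true :: t)) (h2 : NE S (false :: t)) :
    w S (true :: t) = w S t / 2 ∧ w S (false :: t) = w S t / 2 := by
  constructor
  · rw [w_cons]; simp only [Bool.not_true, if_pos h1, if_pos h2]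
  · rw [w_cons]; simp only [Bool.not_false, if_pos h2, if_pos h1]

/-- a chosen point in the cylinder `t` (or an arbitrary point). -/
noncomputable def pt [Nonempty ↥S] (t : List Bool) : ↥S :=
  if h : NE S t then ⟨h.choose, h.choose_spec.1⟩ else Classical.arbitrary _

lemma pt_mem [Nonempty ↥S] {t : List Bool} (h : NE S t) : memC t (pt S t).1 := by
  rw [pt, dif_pos h]
  exact h.choose_spec.2

/-- level-`n` Riemann sums below node `t`. -/
noncomputable def F [Nonempty ↥S] : ℕ → List Bool → C(↥S, ℝ) → ℝ
  | 0 => fun t y => w S t * y (pt S t)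
  | n + 1 => fun t y => F n (true :: t) y + F n (false :: t) y

variable [Nonempty ↥S] [CompactSpace ↥S]

lemma F_zero (t : List Bool) (y : C(↥S, ℝ)) : F S 0 t y = w S t * y (pt S t) := rfl
lemma F_succ (n : ℕ) (t : List Bool) (y : C(↥S, ℝ)) :
    F S (n + 1) t y = F S n (true :: t) y + F S n (false :: t) y := rfl

lemma F_add (n : ℕ) (t : List Bool) (y z : C(↥S, ℝ)) :
    F S n t (y + z) = F S n t y + F S n t z := by
  induction n generalizing t with
  | zero => simp [F_zero]; ring
  | succ n ih => simp [F_succ, ih]; ring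

lemma F_smul (n : ℕ) (t : List Bool) (c : ℝ) (y : C(↥S, ℝ)) :
    F S n t (c • y) = c * F S n t y := by
  induction n generalizing t with
  | zero => simp [F_zero]; ring
  | succ n ih => simp [F_succ, ih]; ring

lemma F_close {y : C(↥S, ℝ)} {c ε : ℝ} (hε : 0 ≤ ε) (n : ℕ) :
    ∀ t : List Bool, (∀ x : ↥S, memC t x.1 → |y x - c| ≤ ε) →
      |F S n t y - w S t * c| ≤ w S t * ε := by
  induction n with
  | zero =>
    intro t h
    by_cases hNE : NE S t
    · rw [F_zero]
      have : w S t * y (pt S t) - w S t * c = w S t * (y (pt S t) - c) := by ring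
      rw [this, abs_mul, abs_of_nonneg (w_nonneg S t)]
      exact mul_le_mul_of_nonneg_left (h _ (pt_mem S hNE)) (w_nonneg S t)
    · rw [F_zero, w_eq_zero S hNE]
      simp
  | succ n ih =>
    intro t h
    have h1 := ih (true :: t) (fun x hx => h x (memC_cons.1 hx).1)
    have h2 := ih (false :: t) (fun x hx => h x (memC_cons.1 hx).1)
    have key : F S (n+1) t y - w S t * c
        = (F S n (true :: t) y - w S (true :: t) * c)
          + (F S n (false :: t) y - w S (false :: t) * c) := by
      rw [F_succ, ← w_children S t]; ring
    rw [key, ← w_children S t]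
    calc |_ + _| ≤ |F S n (true :: t) y - w S (true :: t) * c|
          + |F S n (false :: t) y - w S (false :: t) * c| := abs_add_le _ _
      _ ≤ w S (true :: t) * ε + w S (false :: t) * ε := add_le_add h1 h2
      _ = (w S (true :: t) + w S (false :: t)) * ε := by ring

lemma F_const {y : C(↥S, ℝ)} {c : ℝ} (n : ℕ) (t : List Bool)
    (h : ∀ x : ↥S, memC t x.1 → y x = c) : F S n t y = w S t * c := by
  have := F_close S le_rfl n t (y := y) (c := c) (fun x hx => by rw [h x hx]; simp)
  have h0 : |F S n t y - w S t * c| ≤ 0 := by simpa using this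
  have := abs_nonneg (F S n t y - w S t * c)
  have : |F S n t y - w S t * c| = 0 := le_antisymm h0 this
  linarith [abs_eq_zero.1 this, sub_eq_zero.1 (abs_eq_zero.1 this)]

lemma F_bound (n : ℕ) (t : List Bool) (y : C(↥S, ℝ)) : |F S n t y| ≤ w S t * ‖y‖ := by
  have := F_close S (norm_nonneg y) n t (y := y) (c := 0)
    (fun x _ => by rw [sub_zero, ← Real.norm_eq_abs]; exact y.norm_coe_le_norm x)
  simpa using this

lemma F_est {y : C(↥S, ℝ)} {ε : ℝ} (hε : 0 ≤ ε) (m : ℕ) :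
    ∀ (n : ℕ) (t : List Bool),
      (∀ x x' : ↥S, (∀ i < t.length + m, x.1 i = x'.1 i) → |y x - y x'| ≤ ε) →
      |F S (m + n) t y - F S m t y| ≤ w S t * ε := by
  induction m with
  | zero =>
    intro n t h
    rw [Nat.zero_add, F_zero]
    exact F_close S hε n t (fun x hx => by
      by_cases hNE : NE S t
      · exact h x (pt S t) (fun i hi => memC.agree hx (pt_mem S hNE) (by omega))
      · exact absurd ⟨x.1, x.2, hx⟩ hNE)
  | succ m ih =>
    intro n t h
    have hc : ∀ b : Bool, ∀ x x' : ↥S,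
        (∀ i < (b :: t).length + m, x.1 i = x'.1 i) → |y x - y x'| ≤ ε := by
      intro b x x' hagree
      exact h x x' (fun i hi => hagree i (by simp at hi ⊢; omega))
    have h1 := ih n (true :: t) (hc true)
    have h2 := ih n (false :: t) (hc false)
    have e1 : m + 1 + n = (m + n) + 1 := by omega
    rw [e1, F_succ, F_succ, ← w_children S t]
    calc |_| = |(F S (m+n) (true :: t) y - F S m (true :: t) y)
          + (F S (m+n) (false :: t) y - F S m (false :: t) y)| := by ring_nf
      _ ≤ _ + _ := abs_add_le _ _
      _ ≤ w S (true :: t) * ε + w S (false :: t) * ε := add_le_add h1 h2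
      _ = (w S (true :: t) + w S (false :: t)) * ε := by ring


-- ### CHUNK 3 proper

lemma exists_osc (y : C(↥S, ℝ)) {ε : ℝ} (hε : 0 < ε) :
    ∃ L : ℕ, ∀ x x' : ↥S, (∀ i < L, x.1 i = x'.1 i) → |y x - y x'| ≤ ε := by
  -- for each z, find a cylinder depth n such that y varies by < ε/2 on it
  have key : ∀ z : ↥S, ∃ n : ℕ, ∀ x : ↥S,
      (∀ i < n, x.1 i = z.1 i) → |y x - y z| < ε / 2 := by
    intro z
    have hopen : IsOpen (y ⁻¹' Metric.ball (y z) (ε / 2)) :=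
      y.continuous.isOpen_preimage _ Metric.isOpen_ball
    obtain ⟨W, hW, hpre⟩ := isOpen_induced_iff.1 hopen
    have hzW : z.1 ∈ W := by
      have : z ∈ y ⁻¹' Metric.ball (y z) (ε / 2) := by
        simp [Metric.mem_ball, hε, half_pos hε]
      rw [← hpre] at this; exact this
    obtain ⟨v, ⟨x0, n, rfl⟩, hzv, hvW⟩ :=
      (PiNat.isTopologicalBasis_cylinders (fun _ : ℕ => Bool)).exists_subset_of_mem_open hzW hW
    refine ⟨n, fun x hx => ?_⟩
    have hxW : x.1 ∈ W := by
      apply hvW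
      rw [PiNat.mem_cylinder_iff]
      intro i hi
      rw [hx i hi]
      exact PiNat.mem_cylinder_iff.1 hzv i hi
    have : x ∈ y ⁻¹' Metric.ball (y z) (ε / 2) := by rw [← hpre]; exact hxW
    simpa [Real.dist_eq] using this
  choose g hg using key
  -- the cylinders cover S; extract a finite subcover
  have hcover : (univ : Set ↥S) ⊆ ⋃ z : ↥S, {x : ↥S | ∀ i < g z, x.1 i = z.1 i} := by
    intro x _
    exact mem_iUnion.2 ⟨x, fun i _ => rfl⟩
  have hopen : ∀ z : ↥S, IsOpen {x : ↥S | ∀ i < g z, x.1 i = z.1 i} := by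
    intro z
    have : {x : ↥S | ∀ i < g z, x.1 i = z.1 i}
        = Subtype.val ⁻¹' (PiNat.cylinder z.1 (g z)) := by
      ext x; simp [PiNat.mem_cylinder_iff]
    rw [this]
    exact (PiNat.isOpen_cylinder _ _ _).preimage continuous_subtype_val
  obtain ⟨T, hT⟩ := isCompact_univ.elim_finite_subcover _ hopen hcover
  refine ⟨T.sup g, fun x x' hxx => ?_⟩
  have hx2 := hT (mem_univ x)
  rw [mem_iUnion₂] at hx2
  obtain ⟨z, hzT, hxz⟩ := hx2
  have hx'z : ∀ i < g z, x'.1 i = z.1 i := by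
    intro i hi
    rw [← hxx i (lt_of_lt_of_le hi (Finset.le_sup hzT))]
    exact hxz i hi
  have b1 := hg z x hxz
  have b2 := hg z x' hx'z
  calc |y x - y x'| = |(y x - y z) - (y x' - y z)| := by ring_nf
    _ ≤ |y x - y z| + |y x' - y z| := abs_sub _ _
    _ ≤ ε := by linarith

lemma exists_lim (t : List Bool) (y : C(↥S, ℝ)) :
    ∃ l, Tendsto (fun n => F S n t y) atTop (𝓝 l) := by
  apply cauchySeq_tendsto_of_complete
  rw [Metric.cauchySeq_iff']
  intro ε hε
  obtain ⟨L, hL⟩ := exists_osc S y (half_pos hε)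
  refine ⟨t.length + L, fun n hn => ?_⟩
  have hest := F_est S (le_of_lt (half_pos hε)) (t.length + L) (n - (t.length + L)) t
    (fun x x' h => hL x x' (fun i hi => h i (by omega)))
  rw [Nat.add_sub_cancel' hn] at hest
  rw [Real.dist_eq]
  calc |F S n t y - F S (t.length + L) t y| ≤ w S t * (ε / 2) := hest
    _ ≤ 1 * (ε / 2) := by
        apply mul_le_mul_of_nonneg_right (w_le_one S t); linarith
    _ < ε := by linarith

/-- the raw limit functional at node `t`. -/
noncomputable def Lr (t : List Bool) (y : C(↥S, ℝ)) : ℝ := (exists_lim S t y).choose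

lemma Lr_tendsto (t : List Bool) (y : C(↥S, ℝ)) :
    Tendsto (fun n => F S n t y) atTop (𝓝 (Lr S t y)) := (exists_lim S t y).choose_spec

lemma Lr_add (t : List Bool) (y z : C(↥S, ℝ)) :
    Lr S t (y + z) = Lr S t y + Lr S t z := by
  refine tendsto_nhds_unique (Lr_tendsto S t (y + z)) ?_
  have := (Lr_tendsto S t y).add (Lr_tendsto S t z)
  simpa [F_add] using this

lemma Lr_smul (t : List Bool) (c : ℝ) (y : C(↥S, ℝ)) :
    Lr S t (c • y) = c * Lr S t y := by
  refine tendsto_nhds_unique (Lr_tendsto S t (c • y)) ?_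
  have := (Lr_tendsto S t y).const_mul c
  simpa [F_smul] using this

lemma Lr_bound (t : List Bool) (y : C(↥S, ℝ)) : |Lr S t y| ≤ w S t * ‖y‖ := by
  have h1 : Tendsto (fun n => |F S n t y|) atTop (𝓝 |Lr S t y|) := (Lr_tendsto S t y).abs
  exact le_of_tendsto h1 (Eventually.of_forall fun n => F_bound S n t y)

lemma Lr_close {y : C(↥S, ℝ)} {c ε : ℝ} (hε : 0 ≤ ε) (t : List Bool)
    (h : ∀ x : ↥S, memC t x.1 → |y x - c| ≤ ε) :
    |Lr S t y - w S t * c| ≤ w S t * ε := by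
  have h1 : Tendsto (fun n => |F S n t y - w S t * c|) atTop (𝓝 |Lr S t y - w S t * c|) :=
    ((Lr_tendsto S t y).sub_const _).abs
  exact le_of_tendsto h1 (Eventually.of_forall fun n => F_close S hε n t h)

lemma Lr_const {y : C(↥S, ℝ)} {c : ℝ} (t : List Bool)
    (h : ∀ x : ↥S, memC t x.1 → y x = c) : Lr S t y = w S t * c := by
  have := Lr_close S le_rfl t (y := y) (c := c) (fun x hx => by rw [h x hx]; simp)
  have h2 := abs_nonneg (Lr S t y - w S t * c)
  have h3 : |Lr S t y - w S t * c| = 0 := le_antisymm (by simpa using this) h2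
  have := abs_eq_zero.1 h3
  linarith [sub_eq_zero.1 this]

lemma Lr_vanish {y : C(↥S, ℝ)} (t : List Bool)
    (h : ∀ x : ↥S, memC t x.1 → y x = 0) : Lr S t y = 0 := by
  simpa using Lr_const S t h

lemma Lr_children (t : List Bool) (y : C(↥S, ℝ)) :
    Lr S t y = Lr S (true :: t) y + Lr S (false :: t) y := by
  refine tendsto_nhds_unique ?_ ((Lr_tendsto S (true :: t) y).add (Lr_tendsto S (false :: t) y))
  have h1 : Tendsto (fun n => F S (n + 1) t y) atTop (𝓝 (Lr S t y)) :=
    (tendsto_add_atTop_iff_nat 1).2 (Lr_tendsto S t y)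
  simpa [F_succ] using h1

/-- the functional at node `t`, as a continuous linear map. -/
noncomputable def funL (t : List Bool) : C(↥S, ℝ) →L[ℝ] ℝ :=
  LinearMap.mkContinuous
    { toFun := Lr S t
      map_add' := Lr_add S t
      map_smul' := Lr_smul S t }
    (w S t)
    (fun y => by rw [Real.norm_eq_abs]; exact Lr_bound S t y)

lemma funL_apply (t : List Bool) (y : C(↥S, ℝ)) : funL S t y = Lr S t y := rfl

lemma funL_norm_le (t : List Bool) : ‖funL S t‖ ≤ w S t :=
  LinearMap.mkContinuous_norm_le _ (w_nonneg S t) _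

/-- the indicator of the cylinder `t`, as a continuous map. -/
noncomputable def chi (t : List Bool) : C(↥S, ℝ) :=
  ⟨fun x => if memC t x.1 then 1 else 0, by
    apply Continuous.if _ continuous_const continuous_const
    intro a ha
    have : IsClopen {x : ↥S | memC t x.1} :=
      (isClopen_memC t).preimage continuous_subtype_val
    rw [this.frontier_eq] at ha
    exact absurd ha (Set.notMem_empty a)⟩

lemma chi_apply (t : List Bool) (x : ↥S) :
    chi S t x = if memC t x.1 then 1 else 0 := rfl

/-- the Haar-type vector at a split node `t`. -/
noncomputable def hv (t : List Bool) : C(↥S, ℝ) := chi S (true :: t) - chi S (false :: t)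

lemma hv_apply (t : List Bool) (x : ↥S) :
    hv S t x = (if memC (true :: t) x.1 then (1:ℝ) else 0)
      - (if memC (false :: t) x.1 then 1 else 0) := rfl

lemma not_both {t : List Bool} {x : ℕ → Bool} (h : memC (true :: t) x) :
    ¬ memC (false :: t) x := by
  intro h'
  have h1 := (memC_cons.1 h).2
  have h2 := (memC_cons.1 h').2
  rw [h1] at h2; exact Bool.noConfusion h2

lemma hv_one {t : List Bool} {x : ↥S} (h : memC (true :: t) x.1) : hv S t x = 1 := by
  rw [hv_apply, if_pos h, if_neg (not_both h)]; ring

lemma hv_neg_one {t : List Bool} {x : ↥S} (h : memC (false :: t) x.1) : hv S t x = -1 := by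
  have : ¬ memC (true :: t) x.1 := fun h' => not_both h' h
  rw [hv_apply, if_neg this, if_pos h]; ring

lemma hv_zero {t : List Bool} {x : ↥S} (h : ¬ memC t x.1) : hv S t x = 0 := by
  have h1 : ¬ memC (true :: t) x.1 := fun h' => h (memC_cons.1 h').1
  have h2 : ¬ memC (false :: t) x.1 := fun h' => h (memC_cons.1 h').1
  rw [hv_apply, if_neg h1, if_neg h2]; ring


-- ### CHUNK 4a : norms and biorthogonality

/-- `t` is a split node: both children cylinders meet `S`. -/
def Split (t : List Bool) : Prop := NE S (true :: t) ∧ NE S (false :: t)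

/-- the biorthogonal functional at a split node. -/
noncomputable def gfun (t : List Bool) : C(↥S, ℝ) →L[ℝ] ℝ :=
  (w S t)⁻¹ • (funL S (true :: t) - funL S (false :: t))

lemma gfun_apply (t : List Bool) (y : C(↥S, ℝ)) :
    gfun S t y = (w S t)⁻¹ * (Lr S (true :: t) y - Lr S (false :: t) y) := by
  simp [gfun, funL_apply, smul_eq_mul]

lemma NE_of_split {t : List Bool} (h : Split S t) : NE S t := NE_of_cons S h.1

-- `hv` is ≡ 1 on the true child and ≡ -1 on the false child
lemma Lr_hv_self {t : List Bool} (h : Split S t) : Lr S t (hv S t) = 0 := by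
  rw [Lr_children]
  rw [Lr_const S (true :: t) (fun x hx => hv_one S hx),
    Lr_const S (false :: t) (fun x hx => hv_neg_one S hx)]
  obtain ⟨e1, e2⟩ := w_split S h.1 h.2
  rw [e1, e2]; ring

lemma chi_nil_eq_one : chi S [] = (1 : C(↥S, ℝ)) := by
  ext x
  rw [chi_apply, if_pos (memC_nil _)]
  rfl

lemma norm_chi_nil : ‖chi S []‖ = 1 := by
  rw [chi_nil_eq_one]
  exact norm_one

lemma norm_hv {t : List Bool} (h : Split S t) : ‖hv S t‖ = 1 := by
  apply le_antisymm
  · rw [ContinuousMap.norm_le _ zero_le_one]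
    intro x
    rw [Real.norm_eq_abs, hv_apply]
    split_ifs <;> norm_num
  · obtain ⟨x, hxS, hx⟩ := h.1
    have := (hv S t).norm_coe_le_norm ⟨x, hxS⟩
    rw [hv_one S (x := ⟨x, hxS⟩) hx] at this
    simpa using this

lemma Lr_nil_one : Lr S [] (chi S []) = 1 := by
  rw [Lr_const S [] (fun x _ => by rw [chi_apply, if_pos (memC_nil _)]), w_nil]; ring

lemma norm_funL_nil : ‖funL S []‖ = 1 := by
  apply le_antisymm
  · simpa [w_nil] using funL_norm_le S []
  · have h := (funL S []).le_opNorm (chi S [])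
    rw [funL_apply, Lr_nil_one, norm_chi_nil] at h
    simpa using h

lemma gfun_hv_self {t : List Bool} (h : Split S t) : gfun S t (hv S t) = 1 := by
  rw [gfun_apply,
    Lr_const S (true :: t) (fun x hx => hv_one S hx),
    Lr_const S (false :: t) (fun x hx => hv_neg_one S hx)]
  obtain ⟨e1, e2⟩ := w_split S h.1 h.2
  rw [e1, e2]
  have := w_pos S (NE_of_split S h)
  field_simp
  norm_num

lemma norm_gfun {t : List Bool} (h : Split S t) : ‖gfun S t‖ = 1 := by
  have hw := w_pos S (NE_of_split S h)
  apply le_antisymm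
  · apply ContinuousLinearMap.opNorm_le_bound _ zero_le_one
    intro y
    rw [gfun_apply, Real.norm_eq_abs, abs_mul, abs_inv, abs_of_pos hw]
    have h1 := Lr_bound S (true :: t) y
    have h2 := Lr_bound S (false :: t) y
    have h3 : |Lr S (true :: t) y - Lr S (false :: t) y|
        ≤ w S (true :: t) * ‖y‖ + w S (false :: t) * ‖y‖ := by
      calc _ ≤ |Lr S (true :: t) y| + |Lr S (false :: t) y| := abs_sub _ _
        _ ≤ _ := add_le_add h1 h2
    calc (w S t)⁻¹ * |Lr S (true :: t) y - Lr S (false :: t) y|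
        ≤ (w S t)⁻¹ * ((w S (true :: t) + w S (false :: t)) * ‖y‖) := by
          apply mul_le_mul_of_nonneg_left _ (inv_nonneg.2 hw.le)
          calc _ ≤ _ := h3
            _ = (w S (true :: t) + w S (false :: t)) * ‖y‖ := by ring
      _ = (w S t)⁻¹ * (w S t * ‖y‖) := by rw [w_children]
      _ = ‖y‖ := by field_simp
      _ = 1 * ‖y‖ := by ring
  · have h1 := (gfun S t).le_opNorm (hv S t)
    rw [gfun_hv_self S h, norm_hv S h] at h1
    simpa using h1

-- key extension lemma : `Lr t (hv u) = 0` whenever `u` extends (or equals) `t` and `u` splits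
lemma Lr_hv_of_extends {u : List Bool} (hu : Split S u) (s : List Bool) :
    ∀ t, u = s ++ t → Lr S t (hv S u) = 0 := by
  induction s using List.reverseRecOn with
  | nil => intro t ht; subst ht; simpa using Lr_hv_self S hu
  | append_singleton s b ih =>
    intro t ht
    have ht' : u = s ++ (b :: t) := by
      rw [ht, List.append_assoc]
      rfl
    have h1 : Lr S (b :: t) (hv S u) = 0 := ih (b :: t) ht'
    have h2 : Lr S ((!b) :: t) (hv S u) = 0 := by
      apply Lr_vanish
      intro x hx
      apply hv_zero
      intro hmem
      have hbx : memC (b :: t) x.1 := memC_append (s := s) (by rw [← ht']; exact hmem)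
      have e1 := (memC_cons.1 hbx).2
      have e2 := (memC_cons.1 hx).2
      rw [e1] at e2
      exact Bool.not_ne_self b e2.symm
    rw [Lr_children]
    cases b
    · rw [show ((!false) :: t) = (true :: t) from rfl] at h2
      rw [h1, h2]; ring
    · rw [show ((!true) :: t) = (false :: t) from rfl] at h2
      rw [h1, h2]; ring

lemma gfun_chi_nil {t : List Bool} (h : Split S t) : gfun S t (chi S []) = 0 := by
  rw [gfun_apply,
    Lr_const S (true :: t) (fun x _ => by rw [chi_apply, if_pos (memC_nil _)]),
    Lr_const S (false :: t) (fun x _ => by rw [chi_apply, if_pos (memC_nil _)])]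
  obtain ⟨e1, e2⟩ := w_split S h.1 h.2
  rw [e1, e2]; ring

lemma funL_nil_hv {u : List Bool} (hu : Split S u) : funL S [] (hv S u) = 0 := by
  rw [funL_apply]
  exact Lr_hv_of_extends S hu u [] (by simp)

lemma gfun_hv_ne {t u : List Bool} (ht : Split S t) (hu : Split S u) (hne : t ≠ u) :
    gfun S t (hv S u) = 0 := by
  rcases trichotomy t u with ⟨s, hs⟩ | ⟨s, hs⟩ | hdisj
  · -- u = s ++ t, s ≠ []
    rcases List.eq_nil_or_concat s with rfl | ⟨s', b, rfl⟩
    · exact absurd hs.symm hne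
    have hs' : u = s' ++ (b :: t) := by rw [hs, List.concat_eq_append, List.append_assoc]; rfl
    have h1 : Lr S (b :: t) (hv S u) = 0 := Lr_hv_of_extends S hu s' (b :: t) hs'
    have h2 : Lr S ((!b) :: t) (hv S u) = 0 := by
      apply Lr_vanish
      intro x hx
      apply hv_zero
      intro hmem
      have hbx : memC (b :: t) x.1 :=
        memC_append (s := s') (by rw [← hs']; exact hmem)
      have e1 := (memC_cons.1 hbx).2
      have e2 := (memC_cons.1 hx).2
      rw [e1] at e2
      exact Bool.not_ne_self b e2.symm
    rw [gfun_apply]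
    cases b
    · rw [show ((!false) :: t) = (true :: t) from rfl] at h2
      rw [h1, h2]; ring
    · rw [show ((!true) :: t) = (false :: t) from rfl] at h2
      rw [h1, h2]; ring
  · -- t = s ++ u, s ≠ []
    rcases List.eq_nil_or_concat s with rfl | ⟨s', b, rfl⟩
    · exact absurd hs hne
    have hs' : t = s' ++ (b :: u) := by rw [hs, List.concat_eq_append, List.append_assoc]; rfl
    -- on the cylinder of t, hv u is the constant (if b then 1 else -1)
    have hconst : ∀ x : ↥S, memC t x.1 → hv S u x = (if b then (1:ℝ) else -1) := by
      intro x hx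
      have hbu : memC (b :: u) x.1 := memC_append (s := s') (by rw [← hs']; exact hx)
      cases b
      · simpa using hv_neg_one S hbu
      · simpa using hv_one S hbu
    rw [gfun_apply,
      Lr_const S (true :: t) (fun x hx => hconst x (memC_cons.1 hx).1),
      Lr_const S (false :: t) (fun x hx => hconst x (memC_cons.1 hx).1)]
    obtain ⟨e1, e2⟩ := w_split S ht.1 ht.2
    rw [e1, e2]; ring
  · -- disjoint cylinders
    have hvan : ∀ c : Bool, Lr S (c :: t) (hv S u) = 0 := by
      intro c
      apply Lr_vanish
      intro x hx
      apply hv_zero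
      intro hmem
      exact hdisj x.1 ⟨(memC_cons.1 hx).1, hmem⟩
    rw [gfun_apply, hvan true, hvan false]; ring


-- ### CHUNK 4b : fundamental and total

/-- the index type of the Auerbach basis. -/
def Idx (S : Set (ℕ → Bool)) : Type := Option {t : List Bool // Split S t}

/-- the basis vectors. -/
noncomputable def xvec : Idx S → C(↥S, ℝ) :=
  fun i => match i with
  | none => chi S []
  | some t => hv S t.1

/-- the basis functionals. -/
noncomputable def fvec : Idx S → (C(↥S, ℝ) →L[ℝ] ℝ) :=
  fun i => match i with
  | none => funL S []
  | some t => gfun S t.1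

/-- the linear span of the basis vectors. -/
noncomputable def sp : Submodule ℝ C(↥S, ℝ) := Submodule.span ℝ (Set.range (xvec S))

lemma hv_mem {t : List Bool} (ht : Split S t) : hv S t ∈ sp S :=
  Submodule.subset_span ⟨some ⟨t, ht⟩, rfl⟩

lemma chi_mem (t : List Bool) : chi S t ∈ sp S := by
  induction t with
  | nil => exact Submodule.subset_span ⟨none, rfl⟩
  | cons b t ih =>
    by_cases h1 : NE S (b :: t)
    · by_cases h2 : NE S ((!b) :: t)
      · -- split node
        have hsp : Split S t := by
          cases b
        

          · exact ⟨h2, h1⟩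
          · exact ⟨h1, h2⟩
        have key : ∀ (c : Bool) (x : ↥S), memC t x.1 →
            ((memC (c :: t) x.1 ↔ x.1 t.length = c)) := by
          intro c x hx
          constructor
          · intro h; exact (memC_cons.1 h).2
          · intro h; exact memC_cons.2 ⟨hx, h⟩
        cases b
        · -- b = false : chi (false :: t) = 2⁻¹ • chi t - 2⁻¹ • hv t
          have : chi S (false :: t) = (2⁻¹ : ℝ) • chi S t - (2⁻¹ : ℝ) • hv S t := by
            ext x
            by_cases hx : memC t x.1
            · cases hb : x.1 t.length
              · have hmem : memC (false :: t) x.1 := memC_cons.2 ⟨hx, hb⟩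
                simp only [ContinuousMap.sub_apply, ContinuousMap.smul_apply, smul_eq_mul,
                  chi_apply, if_pos hmem, if_pos hx, hv_neg_one S hmem]
                ring
              · have hmem : memC (true :: t) x.1 := memC_cons.2 ⟨hx, hb⟩
                have hnot : ¬ memC (false :: t) x.1 := fun h => not_both hmem h
                simp only [ContinuousMap.sub_apply, ContinuousMap.smul_apply, smul_eq_mul,
                  chi_apply, if_neg hnot, if_pos hx, hv_one S hmem]
                ring
            · have hnot : ¬ memC (false :: t) x.1 := fun h => hx (memC_cons.1 h).1
              simp only [ContinuousMap.sub_apply, ContinuousMap.smul_apply, smul_eq_mul,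
                chi_apply, if_neg hnot, if_neg hx, hv_zero S hx]
              ring
          rw [this]
          exact Submodule.sub_mem _ (Submodule.smul_mem _ _ ih) (Submodule.smul_mem _ _ (hv_mem S hsp))
        · -- b = true
          have : chi S (true :: t) = (2⁻¹ : ℝ) • chi S t + (2⁻¹ : ℝ) • hv S t := by
            ext x
            by_cases hx : memC t x.1
            · cases hb : x.1 t.length
              · have hmem : memC (false :: t) x.1 := memC_cons.2 ⟨hx, hb⟩
                have hnot : ¬ memC (true :: t) x.1 := fun h => not_both h hmem
                simp only [ContinuousMap.add_apply, ContinuousMap.smul_apply, smul_eq_mul,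
                  chi_apply, if_neg hnot, if_pos hx, hv_neg_one S hmem]
                ring
              · have hmem : memC (true :: t) x.1 := memC_cons.2 ⟨hx, hb⟩
                simp only [ContinuousMap.add_apply, ContinuousMap.smul_apply, smul_eq_mul,
                  chi_apply, if_pos hmem, if_pos hx, hv_one S hmem]
                ring
            · have hnot : ¬ memC (true :: t) x.1 := fun h => hx (memC_cons.1 h).1
              simp only [ContinuousMap.add_apply, ContinuousMap.smul_apply, smul_eq_mul,
                chi_apply, if_neg hnot, if_neg hx, hv_zero S hx]
              ring
          rw [this]
          exact Submodule.add_mem _ (Submodule.smul_mem _ _ ih) (Submodule.smul_mem _ _ (hv_mem S hsp))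
      · -- only the b-child is nonempty : chi (b :: t) = chi t
        have : chi S (b :: t) = chi S t := by
          ext x
          by_cases hx : memC t x.1
          · have hb : x.1 t.length = b := by
              by_contra hb
              have : x.1 t.length = !b := by
                cases b <;> cases hbx : x.1 t.length <;> simp_all
              exact h2 ⟨x.1, x.2, memC_cons.2 ⟨hx, this⟩⟩
            rw [chi_apply, chi_apply, if_pos (memC_cons.2 ⟨hx, hb⟩), if_pos hx]
          · have : ¬ memC (b :: t) x.1 := fun h => hx (memC_cons.1 h).1
            rw [chi_apply, chi_apply, if_neg this, if_neg hx]
        rw [this]; exact ih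
    · -- empty cylinder : chi (b :: t) = 0
      have : chi S (b :: t) = 0 := by
        ext x
        rw [chi_apply, ContinuousMap.zero_apply, if_neg (fun h => h1 ⟨x.1, x.2, h⟩)]
      rw [this]; exact Submodule.zero_mem _

lemma approx (y : C(↥S, ℝ)) {ε : ℝ} (hε : 0 ≤ ε) :
    ∀ (n : ℕ) (t : List Bool),
      (∀ x x' : ↥S, (∀ i < t.length + n, x.1 i = x'.1 i) → |y x - y x'| ≤ ε) →
      ∃ z : C(↥S, ℝ), z ∈ sp S ∧ (∀ x : ↥S, memC t x.1 → |y x - z x| ≤ ε)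
        ∧ (∀ x : ↥S, ¬ memC t x.1 → z x = 0) := by
  intro n
  induction n with
  | zero =>
    intro t h
    refine ⟨y (pt S t) • chi S t, Submodule.smul_mem _ _ (chi_mem S t), ?_, ?_⟩
    · intro x hx
      have hNE : NE S t := ⟨x.1, x.2, hx⟩
      have : (y (pt S t) • chi S t) x = y (pt S t) := by
        simp [chi_apply, if_pos hx]
      rw [this]
      exact h x (pt S t) (fun i hi => memC.agree hx (pt_mem S hNE) (by omega))
    · intro x hx
      simp [chi_apply, if_neg hx]
  | succ n ih =>
    intro t h
    have hc : ∀ c : Bool, ∀ x x' : ↥S,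
        (∀ i < (c :: t).length + n, x.1 i = x'.1 i) → |y x - y x'| ≤ ε := by
      intro c x x' hagree
      exact h x x' (fun i hi => hagree i (by simp at hi ⊢; omega))
    obtain ⟨z0, hz0m, hz0a, hz0b⟩ := ih (true :: t) (hc true)
    obtain ⟨z1, hz1m, hz1a, hz1b⟩ := ih (false :: t) (hc false)
    refine ⟨z0 + z1, Submodule.add_mem _ hz0m hz1m, ?_, ?_⟩
    · intro x hx
      cases hb : x.1 t.length
      · have hm : memC (false :: t) x.1 := memC_cons.2 ⟨hx, hb⟩
        have hn : ¬ memC (true :: t) x.1 := fun h' => not_both h' hm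
        have := hz1a x hm
        rw [ContinuousMap.add_apply, hz0b x hn]
        simpa using this
      · have hm : memC (true :: t) x.1 := memC_cons.2 ⟨hx, hb⟩
        have hn : ¬ memC (false :: t) x.1 := not_both hm
        have := hz0a x hm
        rw [ContinuousMap.add_apply, hz1b x hn]
        simpa using this
    · intro x hx
      have h0 : ¬ memC (true :: t) x.1 := fun h' => hx (memC_cons.1 h').1
      have h1 : ¬ memC (false :: t) x.1 := fun h' => hx (memC_cons.1 h').1
      rw [ContinuousMap.add_apply, hz0b x h0, hz1b x h1, add_zero]

lemma fundamental : (sp S).topologicalClosure = ⊤ := by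
  rw [Submodule.eq_top_iff']
  intro y
  rw [← SetLike.mem_coe, Submodule.topologicalClosure_coe]
  rw [Metric.mem_closure_iff]
  intro ε hε
  obtain ⟨L, hL⟩ := exists_osc S y (half_pos hε)
  obtain ⟨z, hzm, hza, -⟩ := approx S y (le_of_lt (half_pos hε)) L []
    (fun x x' hagree => hL x x' (fun i hi => hagree i (by simpa using hi)))
  refine ⟨z, hzm, ?_⟩
  have : dist y z ≤ ε / 2 := by
    rw [dist_eq_norm]
    rw [ContinuousMap.norm_le _ (le_of_lt (half_pos hε))]
    intro x
    rw [ContinuousMap.sub_apply, Real.norm_eq_abs]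
    exact hza x (memC_nil _)
  linarith

lemma total (y : C(↥S, ℝ)) (h0 : funL S [] y = 0)
    (hg : ∀ t : List Bool, Split S t → gfun S t y = 0) : y = 0 := by
  have key : ∀ t : List Bool, Lr S t y = 0 := by
    intro t
    induction t with
    | nil => rw [← funL_apply]; exact h0
    | cons b t ih =>
      by_cases h1 : NE S (b :: t)
      · by_cases h2 : NE S ((!b) :: t)
        · have hsp : Split S t := by
            cases b
            · exact ⟨h2, h1⟩
            · exact ⟨h1, h2⟩
          have hgt := hg t hsp
          rw [gfun_apply] at hgt
          have hw := w_pos S (NE_of_split S hsp)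
          have heq : Lr S (true :: t) y = Lr S (false :: t) y := by
            have h3 : Lr S (true :: t) y - Lr S (false :: t) y = 0 := by
              rcases mul_eq_zero.1 hgt with h | h
              · exact absurd h (inv_ne_zero (ne_of_gt hw))
              · exact h
            linarith
          have hsum : Lr S (true :: t) y + Lr S (false :: t) y = 0 := by
            rw [← Lr_children]; exact ih
          cases b
          · linarith
          · linarith
        · have hz : Lr S ((!b) :: t) y = 0 := by
            have hb := Lr_bound S ((!b) :: t) y
            rw [w_eq_zero S h2, zero_mul] at hb
            exact abs_eq_zero.1 (le_antisymm hb (abs_nonneg _))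
          have := Lr_children S t y
          rw [ih] at this
          cases b
          · rw [show ((!false) : Bool) = true from rfl] at hz
            rw [hz] at this
            linarith
          · rw [show ((!true) : Bool) = false from rfl] at hz
            rw [hz] at this
            linarith
      · have hb := Lr_bound S (b :: t) y
        rw [w_eq_zero S h1, zero_mul] at hb
        exact abs_eq_zero.1 (le_antisymm hb (abs_nonneg _))
  ext x
  rw [ContinuousMap.zero_apply]
  have habs : ∀ ε : ℝ, 0 < ε → |y x| ≤ ε := by
    intro ε hε
    obtain ⟨L, hL⟩ := exists_osc S y hε
    set t := PiNat.res x.1 L with ht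
    have hNE : NE S t := ⟨x.1, x.2, memC_res _ _⟩
    have hlen : t.length = L := PiNat.res_length _ _
    have hclose := Lr_close S (le_of_lt hε) t (y := y) (c := y x)
      (fun x' hx' => hL x' x (fun i hi => memC.agree hx' (memC_res x.1 L) (by omega)))
    rw [key t, zero_sub, abs_neg, abs_mul, abs_of_pos (w_pos S hNE)] at hclose
    exact le_of_mul_le_mul_left hclose (w_pos S hNE)
  by_contra hne
  have hpos : 0 < |y x| := abs_pos.2 hne
  have := habs (|y x| / 2) (by linarith)
  linarith

end S

theorem mainS (S : Set (ℕ → Bool)) [Nonempty ↥S] [CompactSpace ↥S] :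
    IsAuerbachBasis (xvec S) (fvec S) := by
  constructor
  · rintro (_ | ⟨t, ht⟩)
    · show funL S [] (chi S []) = 1
      rw [funL_apply]; exact Lr_nil_one S
    · exact gfun_hv_self S ht
  · rintro (_ | ⟨t, ht⟩) (_ | ⟨u, hu⟩) hne
    · exact absurd rfl hne
    · exact funL_nil_hv S hu
    · exact gfun_chi_nil S ht
    · refine gfun_hv_ne S ht hu (fun h => hne ?_)
      subst h
      rfl
  · rintro (_ | ⟨t, ht⟩)
    · exact norm_chi_nil S
    · exact norm_hv S ht
  · rintro (_ | ⟨t, ht⟩)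
    · exact norm_funL_nil S
    · exact norm_gfun S ht
  · exact fundamental S
  · intro y hy
    exact total S y (hy none) (fun t ht => hy (some ⟨t, ht⟩))


-- ### CHUNK 5 : reduction

lemma countable_tds (K : Type) [MetricSpace K] [Countable K] :
    TotallyDisconnectedSpace K := by
  constructor
  rintro t - ht x hx y hy
  by_contra hxy
  have hd : 0 < dist x y := dist_pos.2 hxy
  have hr : ∃ r ∈ Ioo (0:ℝ) (dist x y), ∀ z : K, dist x z ≠ r := by
    by_contra hcon
    push_neg at hcon
    have hsub : Ioo (0:ℝ) (dist x y) ⊆ Set.range (fun z : K => dist x z) := by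
      intro r hrr
      obtain ⟨z, hz⟩ := hcon r hrr
      exact ⟨z, hz⟩
    have hcount : (Ioo (0:ℝ) (dist x y)).Countable := (Set.countable_range _).mono hsub
    haveI := hcount.to_subtype
    have hle : Cardinal.mk ↥(Ioo (0:ℝ) (dist x y)) ≤ Cardinal.aleph0 := Cardinal.mk_le_aleph0
    rw [Cardinal.mk_Ioo_real hd] at hle
    exact absurd hle (not_le.2 Cardinal.aleph0_lt_continuum)
  obtain ⟨r, ⟨hr0, hrd⟩, hravoid⟩ := hr
  have hu : IsOpen {z : K | dist x z < r} :=
    isOpen_lt (continuous_const.dist continuous_id) continuous_const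
  have hv : IsOpen {z : K | r < dist x z} :=
    isOpen_lt continuous_const (continuous_const.dist continuous_id)
  have hcover : t ⊆ {z : K | dist x z < r} ∪ {z : K | r < dist x z} := by
    intro z _
    rcases lt_or_gt_of_ne (hravoid z) with h | h
    · exact Or.inl h
    · exact Or.inr h
  have hne1 : (t ∩ {z : K | dist x z < r}).Nonempty := ⟨x, hx, by simpa using hr0⟩
  have hne2 : (t ∩ {z : K | r < dist x z}).Nonempty := ⟨y, hy, by simpa using hrd⟩
  obtain ⟨z, -, hz1, hz2⟩ := ht _ _ hu hv hcover hne1 hne2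
  simp only [mem_setOf_eq] at hz1 hz2
  linarith

lemma transfer {X Y : Type*} [NormedAddCommGroup X] [NormedSpace ℝ X]
    [NormedAddCommGroup Y] [NormedSpace ℝ Y] (e : X ≃ₗᵢ[ℝ] Y)
    {ι : Type*} {x : ι → X} {f : ι → X →L[ℝ] ℝ} (hb : IsAuerbachBasis x f) :
    IsAuerbachBasis (fun i => e (x i))
      (fun i => (f i).comp (e.symm.toContinuousLinearEquiv.toContinuousLinearMap)) := by
  have happ : ∀ (i : ι) (y : Y),
      ((f i).comp (e.symm.toContinuousLinearEquiv.toContinuousLinearMap)) y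
        = f i (e.symm y) := by
    intro i y; rfl
  constructor
  · intro k
    rw [happ]
    simp only [LinearIsometryEquiv.symm_apply_apply]
    exact hb.biorth_eq k
  · intro k j hkj
    rw [happ]
    simp only [LinearIsometryEquiv.symm_apply_apply]
    exact hb.biorth_ne k j hkj
  · intro n
    rw [e.norm_map]
    exact hb.norm_vec n
  · intro n
    have key : ‖(f n).comp (e.symm.toContinuousLinearEquiv.toContinuousLinearMap)‖ = ‖f n‖ := by
      apply le_antisymm
      · apply ContinuousLinearMap.opNorm_le_bound _ (norm_nonneg (f n))
        intro y
        rw [happ]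
        calc ‖f n (e.symm y)‖ ≤ ‖f n‖ * ‖e.symm y‖ := (f n).le_opNorm _
          _ = ‖f n‖ * ‖y‖ := by rw [e.symm.norm_map]
      · apply ContinuousLinearMap.opNorm_le_bound _ (norm_nonneg _)
        intro z
        have h2 := ((f n).comp
          (e.symm.toContinuousLinearEquiv.toContinuousLinearMap)).le_opNorm (e z)
        rw [happ] at h2
        simp only [LinearIsometryEquiv.symm_apply_apply, e.norm_map] at h2
        exact h2
    rw [key]
    exact hb.norm_fun n
  · rw [Submodule.eq_top_iff']
    intro y
    rw [← SetLike.mem_coe, Submodule.topologicalClosure_coe]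
    have h1 : Set.range (fun i => e (x i)) = ⇑e '' Set.range x := by
      rw [← Set.range_comp]; rfl
    have hfun : ⇑(e.toLinearIsometry.toLinearMap) = ⇑e := rfl
    rw [h1, ← hfun, Submodule.span_image, Submodule.map_coe, hfun]
    have hsymm : e.symm y ∈ closure ((Submodule.span ℝ (Set.range x) : Set X)) := by
      rw [← Submodule.topologicalClosure_coe, hb.fundamental]
      trivial
    have him := e.toHomeomorph.image_closure ((Submodule.span ℝ (Set.range x) : Set X))
    have hcoe : ⇑e.toHomeomorph = ⇑e := rfl
    rw [hcoe] at him
    rw [← him]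
    exact ⟨e.symm y, hsymm, by simp⟩
  · intro y hy
    have h1 : e.symm y = 0 := hb.total _ (fun i => by
      have := hy i
      rw [happ] at this
      exact this)
    have := congrArg e h1
    simpa using this

theorem main (K : Type) [MetricSpace K] [CompactSpace K] [Countable K] :
    ∃ (ι : Type) (x : ι → C(K, ℝ)) (f : ι → C(K, ℝ) →L[ℝ] ℝ), IsAuerbachBasis x f := by
  cases isEmpty_or_nonempty K with
  | inl hK =>
    refine ⟨Empty, fun i => i.elim, fun i => i.elim, ?_⟩
    haveI : Subsingleton C(K, ℝ) := ⟨fun a b => ContinuousMap.ext fun p => (hK.false p).elim⟩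
    constructor
    · exact fun k => k.elim
    · exact fun k => k.elim
    · exact fun k => k.elim
    · exact fun k => k.elim
    · rw [Submodule.eq_top_iff']
      intro y
      have hy : y = 0 := Subsingleton.elim _ _
      rw [hy]
      exact Submodule.zero_mem _
    · intro y _
      exact Subsingleton.elim _ _
  | inr hK =>
    haveI := countable_tds K
    have hsep : ∀ p : K × K, ∃ U : Set K, IsClopen U ∧ (p.1 ≠ p.2 → p.1 ∈ U ∧ p.2 ∉ U) := by
      intro p
      by_cases hp : p.1 = p.2
      · exact ⟨∅, isClopen_empty, fun h' => absurd hp h'⟩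
      · obtain ⟨V, hV, h1, h2⟩ := exists_isClopen_of_totally_separated hp
        exact ⟨V, hV, fun _ => ⟨h1, h2⟩⟩
    choose U hUclopen hUsep using hsep
    obtain ⟨en, hen⟩ := exists_surjective_nat (K × K)
    classical
    let φ : K → (ℕ → Bool) := fun k n => if k ∈ U (en n) then true else false
    have hφcont : Continuous φ := by
      apply continuous_pi
      intro n
      apply Continuous.if _ continuous_const continuous_const
      intro a ha
      have hset : {x : K | x ∈ U (en n)} = U (en n) := rfl
      rw [hset, (hUclopen (en n)).frontier_eq] at ha
      exact absurd ha (Set.notMem_empty a)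
    have hφinj : Function.Injective φ := by
      intro a b hab
      by_contra hne
      obtain ⟨n, hn⟩ := hen (a, b)
      obtain ⟨h1, h2⟩ := hUsep (a, b) hne
      have hfn := congrFun hab n
      simp only [φ, hn] at hfn
      rw [if_pos h1, if_neg h2] at hfn
      exact Bool.noConfusion hfn
    have hemb := hφcont.isClosedEmbedding hφinj
    haveI hne : Nonempty ↥(Set.range φ) := ⟨⟨φ hK.some, ⟨hK.some, rfl⟩⟩⟩
    haveI hcs : CompactSpace ↥(Set.range φ) :=
      isCompact_iff_compactSpace.1 (hemb.isClosed_range.isCompact)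
    let hom : K ≃ₜ ↥(Set.range φ) := hemb.toIsEmbedding.toHomeomorph
    have hnorm : ∀ g : C(↥(Set.range φ), ℝ),
        ‖g.comp (⟨hom, hom.continuous⟩ : C(K, ↥(Set.range φ)))‖ = ‖g‖ := by
      intro g
      apply le_antisymm
      · rw [ContinuousMap.norm_le _ (norm_nonneg g)]
        intro p
        exact g.norm_coe_le_norm (hom p)
      · rw [ContinuousMap.norm_le _ (norm_nonneg _)]
        intro s
        have h3 := (g.comp (⟨hom, hom.continuous⟩ : C(K, ↥(Set.range φ)))).norm_coe_le_norm
          (hom.symm s)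
        simpa [ContinuousMap.comp_apply, Homeomorph.apply_symm_apply] using h3
    let E : C(↥(Set.range φ), ℝ) ≃ₗᵢ[ℝ] C(K, ℝ) :=
      { toFun := fun g => g.comp ⟨hom, hom.continuous⟩
        invFun := fun f => f.comp ⟨hom.symm, hom.symm.continuous⟩
        map_add' := by intro a b; ext p; simp
        map_smul' := by intro c a; ext p; simp
        left_inv := by intro g; ext p; simp
        right_inv := by intro f; ext p; simp
        norm_map' := hnorm }
    exact ⟨Idx (Set.range φ), _, _, transfer E (mainS (Set.range φ))⟩


end Stmt17

/-- For every countable compact metric space `K`, the Banach space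
`C(K)` of continuous real-valued functions with the sup norm admits an Auerbach basis. -/
theorem stmt17 (K : Type) [MetricSpace K] [CompactSpace K] [Countable K] :
    ∃ (ι : Type) (x : ι → C(K, ℝ)) (f : ι → C(K, ℝ) →L[ℝ] ℝ), IsAuerbachBasis x f := by
  exact Stmt17.main K
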